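/- Let Φ : G → GL(V) be a measurable representation of a group G on a finite-dimensional normed real vector space V, and μ a probability measure on G with ∫ log‖Φ(g)‖ dμ(g) < ∞. For n ≥ 1 let Z_n' : [0,1] → ℝ be the standard realisation of the law of log‖Φ(g)‖ under μ^{*n}. Then for every η > 0 there exist α > 0 and N' ≥ 0 such that for all n ≥ N', E[Z_n' 𝟙_{[0,α]}] ≤ nη. -/

import Mathlib

open MeasureTheory Set Filter
open scoped ENNReal

/-- The standard realisation of a real random variable with law induced by `(P, Z)`:
`Z'(s) = sup {t : P(Z ≥ t) ≥ s}`, on `[0,1]` with Lebesgue measure. -/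
noncomputable def stdReal {E : Type*} [MeasurableSpace E] (P : Measure E) (Z : E → ℝ) :
    ℝ → ℝ :=
  fun s => sSup {t : ℝ | ENNReal.ofReal s ≤ P {e | t ≤ Z e}}

/-- Convolution of two measures on a (measurable) monoid. -/
noncomputable def mconv {G : Type*} [Monoid G] [MeasurableSpace G]
    (μ ν : Measure G) : Measure G :=
  (μ.prod ν).map fun p => p.1 * p.2

/-- `n`-fold convolution power `μ^{*n}`. -/
noncomputable def convPow {G : Type*} [Monoid G] [MeasurableSpace G]
    (μ : Measure G) : ℕ → Measure G
  | 0 => Measure.dirac 1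
  | n + 1 => mconv μ (convPow μ n)

set_option linter.unusedSectionVars false

section quantile

variable {E : Type*} [MeasurableSpace E] {P : Measure E} [IsProbabilityMeasure P]
  {Z : E → ℝ}

lemma stdReal_set_nonempty {s : ℝ} (hs : s < 1) :
    ({t : ℝ | ENNReal.ofReal s ≤ P {e | t ≤ Z e}}).Nonempty := by
  by_cases hs0 : s ≤ 0
  · exact ⟨0, by simp [ENNReal.ofReal_of_nonpos hs0]⟩
  · have hmono : Monotone (fun n : ℕ => {e | -(n : ℝ) ≤ Z e}) := by
      intro n m hnm e he
      exact le_trans (neg_le_neg ((Nat.cast_le (α := ℝ)).2 hnm)) he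
    have hU : (⋃ n : ℕ, {e | -(n : ℝ) ≤ Z e}) = univ := by
      ext e
      simp only [mem_iUnion, mem_setOf_eq, mem_univ, iff_true]
      obtain ⟨n, hn⟩ := exists_nat_ge (-(Z e))
      exact ⟨n, by linarith⟩
    have hT := tendsto_measure_iUnion_atTop (μ := P) hmono
    rw [hU, measure_univ] at hT
    have hlt : ENNReal.ofReal s < 1 := ENNReal.ofReal_lt_one.2 hs
    obtain ⟨n, hn⟩ := (hT.eventually_const_le hlt).exists
    exact ⟨-(n : ℝ), hn⟩

lemma stdReal_set_bddAbove (hZ : Measurable Z) {s : ℝ} (hs : 0 < s) :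
    BddAbove {t : ℝ | ENNReal.ofReal s ≤ P {e | t ≤ Z e}} := by
  have hanti : Antitone (fun n : ℕ => {e | (n : ℝ) ≤ Z e}) := by
    intro n m hnm e he
    exact le_trans ((Nat.cast_le (α := ℝ)).2 hnm) he
  have hI : (⋂ n : ℕ, {e | (n : ℝ) ≤ Z e}) = ∅ := by
    ext e
    simp only [mem_iInter, mem_setOf_eq, mem_empty_iff_false, iff_false, not_forall, not_le]
    obtain ⟨n, hn⟩ := exists_nat_gt (Z e)
    exact ⟨n, hn⟩
  have hT := tendsto_measure_iInter_atTop (μ := P) (s := fun n : ℕ => {e | (n : ℝ) ≤ Z e})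
    (fun n => (hZ measurableSet_Ici).nullMeasurableSet) hanti ⟨0, by simp⟩
  rw [hI, measure_empty] at hT
  have hpos : (0 : ℝ≥0∞) < ENNReal.ofReal s := ENNReal.ofReal_pos.2 hs
  obtain ⟨n, hn⟩ := (hT.eventually_lt_const hpos).exists
  refine ⟨(n : ℝ), fun t ht => ?_⟩
  by_contra hcon
  push_neg at hcon
  have hsub : {e | t ≤ Z e} ⊆ {e | (n : ℝ) ≤ Z e} := fun e he => le_trans hcon.le he
  exact absurd (le_trans ht (measure_mono hsub)) (not_le.2 hn)

lemma stdReal_antitoneOn (hZ : Measurable Z) {α : ℝ} (hα : α < 1) :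
    AntitoneOn (stdReal P Z) (Ioc 0 α) := by
  intro s₁ h1 s₂ h2 h12
  exact csSup_le_csSup (stdReal_set_bddAbove hZ h1.1)
    (stdReal_set_nonempty (lt_of_le_of_lt h2.2 hα))
    (fun t ht => le_trans (ENNReal.ofReal_le_ofReal h12) ht)

lemma stdReal_le_bound {s c : ℝ} (hc : 0 < c) (h : c < stdReal P Z s) :
    ENNReal.ofReal s ≤ P {e | c < Z e} := by
  set S := {t : ℝ | ENNReal.ofReal s ≤ P {e | t ≤ Z e}} with hS
  have hne : S.Nonempty := by
    by_contra h'
    rw [Set.not_nonempty_iff_eq_empty] at h'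
    rw [stdReal] at h
    rw [← hS, h', Real.sSup_empty] at h
    linarith
  have hbdd : BddAbove S := by
    by_contra h'
    rw [stdReal] at h
    rw [← hS, Real.sSup_of_not_bddAbove h'] at h
    linarith
  obtain ⟨t, htS, hct⟩ := exists_lt_of_lt_csSup hne h
  exact le_trans htS (measure_mono fun e he => lt_of_lt_of_le hct he)

end quantile

section marg

variable {G : Type*} [MeasurableSpace G] (μ ν : Measure G)
  [IsProbabilityMeasure μ] [IsProbabilityMeasure ν]

lemma lint_fst (f : G → ℝ≥0∞) (hf : Measurable f) :
    ∫⁻ p, f p.1 ∂(μ.prod ν) = ∫⁻ g, f g ∂μ := by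
  rw [← lintegral_map hf measurable_fst, Measure.map_fst_prod, measure_univ, one_smul]

lemma lint_snd (f : G → ℝ≥0∞) (hf : Measurable f) :
    ∫⁻ p, f p.2 ∂(μ.prod ν) = ∫⁻ g, f g ∂ν := by
  rw [← lintegral_map hf measurable_snd, Measure.map_snd_prod, measure_univ, one_smul]

end marg

section conv

variable {G V : Type*} [Group G] [MeasurableSpace G] [MeasurableMul₂ G]
  [NormedAddCommGroup V] [NormedSpace ℝ V]
  (μ : Measure G) [IsProbabilityMeasure μ]

lemma convPow_isProb (n : ℕ) : IsProbabilityMeasure (convPow μ n) := by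
  induction n with
  | zero => rw [convPow]; infer_instance
  | succ n ih =>
      rw [convPow, mconv]
      exact Measure.isProbabilityMeasure_map measurable_mul.aemeasurable

variable (Φ : G →* (V →L[ℝ] V))

lemma log_submul (g h : G) :
    Real.log ‖Φ (g * h)‖ ≤ Real.log ‖Φ g‖ + Real.log ‖Φ h‖ := by
  have hn : ‖Φ (g * h)‖ ≤ ‖Φ g‖ * ‖Φ h‖ := by
    rw [map_mul]; exact norm_mul_le _ _
  rcases eq_or_lt_of_le (norm_nonneg (Φ (g * h))) with h0 | h0
  · have hzero : (1 : V →L[ℝ] V) = 0 := by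
      have h1 : Φ (g * h) * Φ ((g * h)⁻¹) = 1 := by
        rw [← map_mul, mul_inv_cancel, map_one]
      have h2 : Φ (g * h) = 0 := by
        rw [← norm_eq_zero]; exact h0.symm
      rw [h2, zero_mul] at h1
      exact h1.symm
    have hg : Φ g = 0 := by rw [← mul_one (Φ g), hzero, mul_zero]
    have hh : Φ h = 0 := by rw [← mul_one (Φ h), hzero, mul_zero]
    have hgh : Φ (g * h) = 0 := by rw [← mul_one (Φ (g * h)), hzero, mul_zero]
    simp [hg, hh, hgh]
  · have hab : 0 < ‖Φ g‖ * ‖Φ h‖ := lt_of_lt_of_le h0 hn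
    have ha : 0 < ‖Φ g‖ := by
      rcases (norm_nonneg (Φ g)).eq_or_lt with h' | h'
      · rw [← h', zero_mul] at hab; exact absurd hab (lt_irrefl 0)
      · exact h'
    have hb : 0 < ‖Φ h‖ := by
      rcases (norm_nonneg (Φ h)).eq_or_lt with h' | h'
      · rw [← h', mul_zero] at hab; exact absurd hab (lt_irrefl 0)
      · exact h'
    calc Real.log ‖Φ (g * h)‖ ≤ Real.log (‖Φ g‖ * ‖Φ h‖) := Real.log_le_log h0 hn
      _ = Real.log ‖Φ g‖ + Real.log ‖Φ h‖ := Real.log_mul (ne_of_gt ha) (ne_of_gt hb)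

lemma log_one_nonpos : Real.log ‖Φ (1 : G)‖ ≤ 0 := by
  rw [map_one]
  refine Real.log_nonpos (norm_nonneg _) ?_
  rw [ContinuousLinearMap.one_def]
  exact ContinuousLinearMap.norm_id_le

lemma convPow_tail_bound (hΦ : Measurable fun g => Real.log ‖Φ g‖) (K : ℝ) (hK : 0 ≤ K)
    (n : ℕ) :
    ∫⁻ g, ENNReal.ofReal (Real.log ‖Φ g‖ - n * K) ∂(convPow μ n)
      ≤ n * ∫⁻ g, ENNReal.ofReal (Real.log ‖Φ g‖ - K) ∂μ := by
  have hmf : ∀ c : ℝ, Measurable fun g => ENNReal.ofReal (Real.log ‖Φ g‖ - c) :=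
    fun c => (hΦ.sub measurable_const).ennreal_ofReal
  induction n with
  | zero =>
      rw [convPow]
      simp only [Nat.cast_zero, zero_mul, sub_zero]
      rw [lintegral_dirac' _ hΦ.ennreal_ofReal,
        ENNReal.ofReal_of_nonpos (log_one_nonpos Φ)]
  | succ n ih =>
      haveI := convPow_isProb μ n
      rw [convPow, mconv, lintegral_map (hmf _) measurable_mul]
      calc ∫⁻ p : G × G, ENNReal.ofReal (Real.log ‖Φ (p.1 * p.2)‖ - (n + 1 : ℕ) * K)
              ∂(μ.prod (convPow μ n))
          ≤ ∫⁻ p : G × G, (ENNReal.ofReal (Real.log ‖Φ p.1‖ - K)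
              + ENNReal.ofReal (Real.log ‖Φ p.2‖ - n * K)) ∂(μ.prod (convPow μ n)) := by
            refine lintegral_mono fun p => ?_
            have h1 : Real.log ‖Φ (p.1 * p.2)‖ - (n + 1 : ℕ) * K
                ≤ (Real.log ‖Φ p.1‖ - K) + (Real.log ‖Φ p.2‖ - n * K) := by
              have := log_submul Φ p.1 p.2
              push_cast
              linarith
            exact le_trans (ENNReal.ofReal_le_ofReal h1) (ENNReal.ofReal_add_le)
        _ = ∫⁻ g, ENNReal.ofReal (Real.log ‖Φ g‖ - K) ∂μ
              + ∫⁻ g, ENNReal.ofReal (Real.log ‖Φ g‖ - n * K) ∂(convPow μ n) := by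
            have hf1 : Measurable fun p : G × G =>
                ENNReal.ofReal (Real.log ‖Φ p.1‖ - K) := (hmf K).comp measurable_fst
            rw [lintegral_add_left hf1]
            rw [lint_fst _ _ _ (hmf K), lint_snd _ _ _ (hmf (n * K))]
        _ ≤ ∫⁻ g, ENNReal.ofReal (Real.log ‖Φ g‖ - K) ∂μ
              + n * ∫⁻ g, ENNReal.ofReal (Real.log ‖Φ g‖ - K) ∂μ := by
            exact add_le_add_right ih _
        _ = (n + 1 : ℕ) * ∫⁻ g, ENNReal.ofReal (Real.log ‖Φ g‖ - K) ∂μ := by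
            push_cast
            ring

end conv

/-- If `Φ` is a representation with `∫ log‖Φ(g)‖ dμ < ∞`, and `Z_n'` is the standard
realisation of `log‖Φ(g)‖` under `μ^{*n}`, then for every `η > 0` there are `α > 0` and
`N'` with `E[Z_n' 𝟙_{[0,α]}] ≤ nη` for all `n ≥ N'`. -/
theorem stmt9 {G V : Type*} [Group G] [MeasurableSpace G] [MeasurableMul₂ G]
    [NormedAddCommGroup V] [NormedSpace ℝ V] [FiniteDimensional ℝ V]
    (Φ : G →* (V →L[ℝ] V)) (hΦ : Measurable fun g => Real.log ‖Φ g‖)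
    (μ : Measure G) [IsProbabilityMeasure μ]
    (hmom : Integrable (fun g => Real.log ‖Φ g‖) μ) :
    ∀ η : ℝ, 0 < η → ∃ α : ℝ, 0 < α ∧ ∃ N' : ℕ, ∀ n : ℕ, N' ≤ n →
      ∫ s in Icc (0:ℝ) α, stdReal (convPow μ n) (fun g => Real.log ‖Φ g‖) s
        ≤ n * η := by
  intro η hη
  set Z : G → ℝ := fun g => Real.log ‖Φ g‖ with hZdef
  have hofmax : ∀ x : ℝ, ENNReal.ofReal (max x 0) = ENNReal.ofReal x := fun x => by
    rcases le_total x 0 with h | h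
    · rw [max_eq_right h, ENNReal.ofReal_of_nonpos h, ENNReal.ofReal_zero]
    · rw [max_eq_left h]
  -- choose K
  have htend : Tendsto (fun m : ℕ => ∫⁻ g, ENNReal.ofReal (Z g - m) ∂μ) atTop (nhds 0) := by
    have h0 := tendsto_lintegral_of_dominated_convergence (μ := μ)
      (F := fun m : ℕ => fun g => ENNReal.ofReal (Z g - m))
      (f := fun _ => 0) (bound := fun g => ENNReal.ofReal (Z g))
      (fun m => (hΦ.sub measurable_const).ennreal_ofReal)
      (fun m => ae_of_all _ fun g =>
        ENNReal.ofReal_le_ofReal (by simp [sub_le_self_iff, Nat.cast_nonneg]))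
      (ne_top_of_le_ne_top hmom.2.ne
        (lintegral_mono fun g => Real.ofReal_le_enorm _))
      (ae_of_all _ fun g => by
        have hev : ∀ᶠ m : ℕ in atTop, ENNReal.ofReal (Z g - m) = 0 := by
          obtain ⟨m₀, hm₀⟩ := exists_nat_ge (Z g)
          filter_upwards [eventually_ge_atTop m₀] with m hm
          have : (m₀ : ℝ) ≤ m := Nat.cast_le.2 hm
          exact ENNReal.ofReal_of_nonpos (by linarith)
        exact tendsto_const_nhds.congr' (hev.mono fun m h => h.symm))
    simpa using h0
  obtain ⟨m, hm⟩ := (htend.eventually_lt_const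
    (ENNReal.ofReal_pos.2 (by positivity : (0:ℝ) < η / 2))).exists
  set K : ℕ := max m 1 with hKdef
  have hK1 : (1 : ℕ) ≤ K := le_max_right _ _
  have hKpos : (0 : ℝ) < K := by exact_mod_cast Nat.lt_of_lt_of_le Nat.zero_lt_one hK1
  have hKB : ∫⁻ g, ENNReal.ofReal (Z g - K) ∂μ ≤ ENNReal.ofReal (η / 2) := by
    refine le_trans (lintegral_mono fun g => ENNReal.ofReal_le_ofReal ?_) hm.le
    have : (m : ℝ) ≤ K := Nat.cast_le.2 (le_max_left _ _)
    linarith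
  set α : ℝ := min (η / (2 * K)) (1 / 2) with hαdef
  have hαpos : 0 < α := lt_min (by positivity) (by norm_num)
  have hα1 : α < 1 := lt_of_le_of_lt (min_le_right _ _) (by norm_num)
  refine ⟨α, hαpos, 0, fun n _ => ?_⟩
  haveI hPn : IsProbabilityMeasure (convPow μ n) := convPow_isProb μ n
  set P : Measure G := convPow μ n with hPdef
  set Q : ℝ → ℝ := stdReal P Z with hQdef
  set c : ℝ := (n : ℝ) * K with hcdef
  have hc0 : 0 ≤ c := by positivity
  have hQm : AEMeasurable Q (volume.restrict (Ioc 0 α)) :=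
    aemeasurable_restrict_of_antitoneOn measurableSet_Ioc (stdReal_antitoneOn hΦ hα1)
  -- the main lintegral estimate
  have key : ∫⁻ s in Ioc (0:ℝ) α, ENNReal.ofReal (Q s) ≤ ENNReal.ofReal (n * η) := by
    have hterm2 : ∫⁻ s in Ioc (0:ℝ) α, ENNReal.ofReal (Q s - c)
        ≤ ENNReal.ofReal ((n : ℝ) * (η / 2)) := by
      calc ∫⁻ s in Ioc (0:ℝ) α, ENNReal.ofReal (Q s - c)
          = ∫⁻ s in Ioc (0:ℝ) α, ENNReal.ofReal (max (Q s - c) 0) :=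
            lintegral_congr fun s => (hofmax _).symm
        _ = ∫⁻ u in Ioi (0:ℝ), (volume.restrict (Ioc (0:ℝ) α)) {s | u < max (Q s - c) 0} :=
            lintegral_eq_lintegral_meas_lt _ (ae_of_all _ fun s => le_max_right _ _)
              ((hQm.sub aemeasurable_const).max aemeasurable_const)
        _ ≤ ∫⁻ u in Ioi (0:ℝ), P {g | u < max (Z g - c) 0} := by
            refine lintegral_mono_ae ?_
            filter_upwards [ae_restrict_mem measurableSet_Ioi] with u hu
            have hu0 : (0:ℝ) < u := hu
            rw [Measure.restrict_apply' measurableSet_Ioc]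
            have hsub : {s | u < max (Q s - c) 0} ∩ Ioc 0 α
                ⊆ Ioc 0 ((P {g | c + u < Z g}).toReal) := by
              rintro s ⟨hs1, hs2⟩
              have hs1' : u < max (Q s - c) 0 := hs1
              have h1 : u < Q s - c := by
                rcases lt_max_iff.1 hs1' with h | h
                · exact h
                · exact absurd h (not_lt.2 hu0.le)
              have h2 : c + u < Q s := by linarith
              have h3 : (0:ℝ) < c + u := by positivity
              have h4 : ENNReal.ofReal s ≤ P {g | c + u < Z g} :=
                stdReal_le_bound h3 h2
              exact ⟨hs2.1, (ENNReal.ofReal_le_iff_le_toReal (measure_ne_top P _)).1 h4⟩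
            refine le_trans (measure_mono hsub) ?_
            rw [Real.volume_Ioc, sub_zero, ENNReal.ofReal_toReal (measure_ne_top P _)]
            have hset : {g | c + u < Z g} = {g | u < max (Z g - c) 0} := by
              ext g
              simp only [mem_setOf_eq, lt_max_iff]
              constructor
              · intro h; left; linarith
              · rintro (h | h)
                · linarith
                · exact absurd h (not_lt.2 hu0.le)
            rw [hset]
        _ = ∫⁻ g, ENNReal.ofReal (max (Z g - c) 0) ∂P :=
            (lintegral_eq_lintegral_meas_lt P (ae_of_all _ fun g => le_max_right _ _)
              (((hΦ.sub measurable_const).max measurable_const).aemeasurable)).symm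
        _ = ∫⁻ g, ENNReal.ofReal (Z g - c) ∂P := lintegral_congr fun g => hofmax _
        _ ≤ n * ∫⁻ g, ENNReal.ofReal (Z g - K) ∂μ :=
            convPow_tail_bound μ Φ hΦ (K : ℝ) hKpos.le n
        _ ≤ n * ENNReal.ofReal (η / 2) := mul_le_mul_right hKB _
        _ = ENNReal.ofReal ((n : ℝ) * (η / 2)) := by
            rw [ENNReal.ofReal_mul (Nat.cast_nonneg n), ENNReal.ofReal_natCast]
    calc ∫⁻ s in Ioc (0:ℝ) α, ENNReal.ofReal (Q s)
        ≤ ∫⁻ s in Ioc (0:ℝ) α, (ENNReal.ofReal c + ENNReal.ofReal (Q s - c)) := by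
          refine lintegral_mono fun s => ?_
          exact le_trans (ENNReal.ofReal_le_ofReal (by linarith)) ENNReal.ofReal_add_le
      _ = ENNReal.ofReal c * volume (Ioc (0:ℝ) α)
            + ∫⁻ s in Ioc (0:ℝ) α, ENNReal.ofReal (Q s - c) := by
          rw [lintegral_add_left measurable_const, setLIntegral_const]
      _ ≤ ENNReal.ofReal ((n : ℝ) * (η / 2)) + ENNReal.ofReal ((n : ℝ) * (η / 2)) := by
          refine add_le_add ?_ hterm2
          rw [Real.volume_Ioc, sub_zero, ← ENNReal.ofReal_mul hc0]
          refine ENNReal.ofReal_le_ofReal ?_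
          have h1 : c * α ≤ c * (η / (2 * K)) :=
            mul_le_mul_of_nonneg_left (min_le_left _ _) hc0
          have h2 : c * (η / (2 * K)) = (n : ℝ) * (η / 2) := by
            rw [hcdef]; field_simp
          linarith
      _ = ENNReal.ofReal (n * η) := by
          rw [← ENNReal.ofReal_add (by positivity) (by positivity)]
          congr 1
          ring
  -- back to the Bochner integral
  have hrs : volume.restrict (Icc (0:ℝ) α) = volume.restrict (Ioc (0:ℝ) α) :=
    (Measure.restrict_congr_set Ioc_ae_eq_Icc).symm
  have hgoal : ∫ s in Icc (0:ℝ) α, Q s ≤ n * η := by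
    rw [hrs]
    by_cases hint : Integrable Q (volume.restrict (Ioc (0:ℝ) α))
    · have hpos' : Integrable (fun s => max (Q s) 0) (volume.restrict (Ioc (0:ℝ) α)) :=
        hint.pos_part
      have hb1 : ∫ s in Ioc (0:ℝ) α, Q s ≤ ∫ s in Ioc (0:ℝ) α, max (Q s) 0 :=
        integral_mono hint hpos' fun s => le_max_left _ _
      have hb2 : ∫ s in Ioc (0:ℝ) α, max (Q s) 0
          = (∫⁻ s in Ioc (0:ℝ) α, ENNReal.ofReal (max (Q s) 0)).toReal :=
        integral_eq_lintegral_of_nonneg_ae (ae_of_all _ fun s => le_max_right _ _)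
          hpos'.aestronglyMeasurable
      have hb3 : (∫⁻ s in Ioc (0:ℝ) α, ENNReal.ofReal (max (Q s) 0)).toReal
          ≤ (ENNReal.ofReal ((n : ℝ) * η)).toReal := by
        refine ENNReal.toReal_mono ENNReal.ofReal_ne_top ?_
        refine le_trans (le_of_eq (lintegral_congr fun s => hofmax _)) key
      rw [ENNReal.toReal_ofReal (by positivity)] at hb3
      linarith
    · rw [integral_undef hint]
      positivity
  exact hgoal
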